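/- Let G be a group, H an infinite almost malnormal subgroup of G, and X an H-almost invariant subset of G. If g ∈ G is such that gX is equivalent to X or to X* (both corresponding corners H-finite), then H and gHg⁻¹ are commensurable, and hence g ∈ H. -/

import Mathlib

open scoped Pointwise

/-- A subset `A` of `G` is `H`-finite if it is contained in finitely many
right cosets `Hg` of the subgroup `H`. -/
def HFinite {G : Type*} [Group G] (H : Subgroup G) (A : Set G) : Prop :=
  ∃ F : Finset G, A ⊆ ⋃ g ∈ F, ((H : Set G) * {g} : Set G)

/-- `X` is `H`-almost invariant. -/
def AlmostInv {G : Type*} [Group G] (H : Subgroup G) (X : Set G) : Prop :=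
  (H : Set G) * X = X ∧
    ∀ g : G, HFinite H ((X \ ((X * {g} : Set G))) ∪ (((X * {g} : Set G)) \ X))

private lemma mem_mul_singleton {G : Type*} [Group G] (A : Set G) (a x : G) :
    x ∈ A * {a} ↔ x * a⁻¹ ∈ A := by
  simp [Set.mem_mul, eq_comm, eq_mul_inv_iff_mul_eq]

private lemma hfinite_union {G : Type*} [Group G] (H : Subgroup G) {A B : Set G}
    (hA : HFinite H A) (hB : HFinite H B) : HFinite H (A ∪ B) := by
  classical
  obtain ⟨F1, h1⟩ := hA
  obtain ⟨F2, h2⟩ := hB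
  refine ⟨F1 ∪ F2, ?_⟩
  rintro x (hx | hx)
  · obtain ⟨s, ⟨f, rfl⟩, hs⟩ := h1 hx
    simp only [Set.mem_iUnion] at hs ⊢
    obtain ⟨hf, hm⟩ := hs
    exact ⟨f, Finset.mem_union_left _ hf, hm⟩
  · obtain ⟨s, ⟨f, rfl⟩, hs⟩ := h2 hx
    simp only [Set.mem_iUnion] at hs ⊢
    obtain ⟨hf, hm⟩ := hs
    exact ⟨f, Finset.mem_union_right _ hf, hm⟩

/-- The symmetric difference of a set and its right translate is unchanged
(as a set) by taking complements. -/
private lemma symmdiff_compl {G : Type*} [Group G] (Z : Set G) (a : G) :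
    ((Zᶜ \ (Zᶜ * {a})) ∪ ((Zᶜ * {a}) \ Zᶜ)) = ((Z \ (Z * {a})) ∪ ((Z * {a}) \ Z)) := by
  ext x
  simp only [Set.mem_union, Set.mem_diff, Set.mem_compl_iff, mem_mul_singleton]
  tauto

/-- Core lemma: if `X` is a nontrivial `H`-invariant set, `Y` is almost
right-invariant over (the coset sets of) `K`, and `X` and `Y` are `H`-almost
equal, then `K ∩ H` is infinite. -/
private lemma core {G : Type*} [Group G] (H : Subgroup G) (hInf : (H : Set G).Infinite)
    (X Y : Set G) (K : Subgroup G)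
    (hXinv : ∀ h ∈ H, ∀ x : G, h * x ∈ X ↔ x ∈ X)
    (hXnf : ¬ HFinite H X) (hXcnf : ¬ HFinite H Xᶜ)
    (hXY : HFinite H ((X \ Y) ∪ (Y \ X)))
    (hYai : ∀ a : G, ∃ F : Finset G,
      ((Y \ (Y * {a})) ∪ ((Y * {a}) \ Y)) ⊆ ⋃ c ∈ F, ((K : Set G) * {c} : Set G)) :
    ((K : Set G) ∩ (H : Set G)).Infinite := by
  obtain ⟨F, hF⟩ := hXY
  set S : Set G := ⋃ f ∈ F, ((H : Set G) * {f}) with hS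
  have hSinv : ∀ h ∈ H, ∀ x : G, h * x ∈ S ↔ x ∈ S := by
    intro h hh x
    simp only [hS, Set.mem_iUnion, mem_mul_singleton, SetLike.mem_coe]
    constructor
    · rintro ⟨f, hf, hm⟩
      rw [mul_assoc, H.mul_mem_cancel_left hh] at hm
      exact ⟨f, hf, hm⟩
    · rintro ⟨f, hf, hm⟩
      exact ⟨f, hf, by rw [mul_assoc, H.mul_mem_cancel_left hh]; exact hm⟩
  -- pick y ∈ X \ S and z ∈ Xᶜ \ S
  have hyE : ∃ y, y ∈ X ∧ y ∉ S := by
    by_contra hcon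
    push_neg at hcon
    exact hXnf ⟨F, fun x hx => hcon x hx⟩
  obtain ⟨y, hyX, hyS⟩ := hyE
  have hzE : ∃ z, z ∉ X ∧ z ∉ S := by
    by_contra hcon
    push_neg at hcon
    exact hXcnf ⟨F, fun x hx => hcon x hx⟩
  obtain ⟨z, hzX, hzS⟩ := hzE
  have hyY : y ∈ Y := by
    by_contra hy
    exact hyS (hF (Or.inl ⟨hyX, hy⟩))
  have hzY : z ∉ Y := fun hz => hzS (hF (Or.inr ⟨hz, hzX⟩))
  -- the H-orbit of y stays in Y, the H-orbit of z stays outside Y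
  have hHy : ∀ h ∈ H, h * y ∈ Y := by
    intro h hh
    by_contra hc
    have hxm : h * y ∈ X := (hXinv h hh y).mpr hyX
    exact hyS ((hSinv h hh y).mp (hF (Or.inl ⟨hxm, hc⟩)))
  have hHz : ∀ h ∈ H, h * z ∉ Y := by
    intro h hh hc
    have hxm : h * z ∉ X := fun hm => hzX ((hXinv h hh z).mp hm)
    exact hzS ((hSinv h hh z).mp (hF (Or.inr ⟨hc, hxm⟩)))
  -- use almost invariance of Y for a = z⁻¹ * y
  obtain ⟨Fa, hFa⟩ := hYai (z⁻¹ * y)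
  have key : ∀ h ∈ H, ∃ c ∈ Fa, h * y * c⁻¹ ∈ K := by
    intro h hh
    have hmem : h * y ∈ (Y \ (Y * {z⁻¹ * y})) ∪ ((Y * {z⁻¹ * y}) \ Y) := by
      left
      refine ⟨hHy h hh, ?_⟩
      rw [mem_mul_singleton]
      have he : h * y * (z⁻¹ * y)⁻¹ = h * z := by group
      rw [he]
      exact hHz h hh
    have := hFa hmem
    simp only [Set.mem_iUnion, mem_mul_singleton, SetLike.mem_coe] at this
    obtain ⟨c, hc, hKc⟩ := this
    exact ⟨c, hc, hKc⟩
  -- pigeonhole: some coset carries infinitely many elements of H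
  have hexc : ∃ c ∈ Fa, ((H : Set G) ∩ {x : G | x * y * c⁻¹ ∈ K}).Infinite := by
    by_contra hcon
    push_neg at hcon
    have hfin : (⋃ c ∈ Fa, ((H : Set G) ∩ {x : G | x * y * c⁻¹ ∈ K})).Finite :=
      Set.Finite.biUnion Fa.finite_toSet fun c hc => hcon c hc
    refine hInf (hfin.subset ?_)
    intro h hh
    obtain ⟨c, hc, hKc⟩ := key h hh
    exact Set.mem_biUnion hc ⟨hh, hKc⟩
  obtain ⟨c, _, hci⟩ := hexc
  obtain ⟨w, hwH, hwK⟩ := hci.nonempty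
  have himg : ((fun v => v * w⁻¹) '' ((H : Set G) ∩ {x : G | x * y * c⁻¹ ∈ K})).Infinite :=
    hci.image (Set.injOn_of_injective (mul_left_injective w⁻¹))
  refine himg.mono ?_
  rintro _ ⟨v, ⟨hvH, hvK⟩, rfl⟩
  constructor
  · show v * w⁻¹ ∈ K
    have he : v * w⁻¹ = (v * y * c⁻¹) * (w * y * c⁻¹)⁻¹ := by group
    rw [he]
    exact K.mul_mem hvK (K.inv_mem hwK)
  · show v * w⁻¹ ∈ H
    exact H.mul_mem hvH (H.inv_mem hwH)

theorem mem_of_translate_equivalent {G : Type*} [Group G] (hG : Group.FG G)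
    (H : Subgroup G) (hHfg : H.FG) (hInf : (H : Set G).Infinite)
    (hMal : ∀ g : G, (((fun h => g * h * g⁻¹) '' (H : Set G)) ∩ (H : Set G)).Infinite → g ∈ H)
    (X : Set G) (hX : AlmostInv H X) (hXnt : ¬ HFinite H X ∧ ¬ HFinite H Xᶜ)
    (g : G)
    (hEquiv : (HFinite H (((g • X : Set G)) ∩ Xᶜ) ∧ HFinite H (((g • X : Set G))ᶜ ∩ X)) ∨
              (HFinite H (((g • X : Set G)) ∩ X) ∧ HFinite H (((g • X : Set G))ᶜ ∩ Xᶜ))) :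
    ((H ⊓ Subgroup.map (MulAut.conj g).toMonoidHom H).relIndex H ≠ 0 ∧
     (H ⊓ Subgroup.map (MulAut.conj g).toMonoidHom H).relIndex
       (Subgroup.map (MulAut.conj g).toMonoidHom H) ≠ 0) ∧ g ∈ H := by
  set K := Subgroup.map (MulAut.conj g).toMonoidHom H with hK
  have hKmem : ∀ x : G, x ∈ K ↔ ∃ h ∈ H, g * h * g⁻¹ = x := by
    intro x
    simp [hK, Subgroup.mem_map, MulAut.conj_apply]
  -- left invariance of X under H
  have hXinv : ∀ h ∈ H, ∀ x : G, h * x ∈ X ↔ x ∈ X := by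
    intro h hh x
    constructor
    · intro hx
      have hm : h⁻¹ * (h * x) ∈ (H : Set G) * X :=
        Set.mul_mem_mul (by simpa using H.inv_mem hh) hx
      rw [hX.1] at hm
      simpa using hm
    · intro hx
      have hm : h * x ∈ (H : Set G) * X := Set.mul_mem_mul hh hx
      rwa [hX.1] at hm
  -- membership in g • X
  have hmemY : ∀ x : G, x ∈ (g • X : Set G) ↔ g⁻¹ * x ∈ X := by
    intro x
    rw [Set.mem_smul_set_iff_inv_smul_mem, smul_eq_mul]
  -- almost right invariance of g • X over K
  have hYai1 : ∀ a : G, ∃ F : Finset G,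
      (((g • X : Set G) \ ((g • X : Set G) * {a})) ∪ (((g • X : Set G) * {a}) \ (g • X : Set G)))
        ⊆ ⋃ c ∈ F, ((K : Set G) * {c} : Set G) := by
    intro a
    classical
    obtain ⟨F, hF⟩ := hX.2 a
    refine ⟨F.image (g * ·), ?_⟩
    intro x hx
    have hx' : g⁻¹ * x ∈ (X \ (X * {a})) ∪ ((X * {a}) \ X) := by
      simp only [Set.mem_union, Set.mem_diff, mem_mul_singleton, hmemY, mul_assoc] at hx ⊢
      exact hx
    have := hF hx'
    simp only [Set.mem_iUnion, mem_mul_singleton, SetLike.mem_coe] at this ⊢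
    obtain ⟨f, hf, hm⟩ := this
    refine ⟨g * f, Finset.mem_image_of_mem _ hf, ?_⟩
    rw [hKmem]
    exact ⟨g⁻¹ * x * f⁻¹, hm, by group⟩
  -- the key commensurability fact
  have hKHinf : ((K : Set G) ∩ (H : Set G)).Infinite := by
    rcases hEquiv with ⟨h1, h2⟩ | ⟨h1, h2⟩
    · -- g • X is equivalent to X ; take Y = g • X
      refine core H hInf X (g • X) K hXinv hXnt.1 hXnt.2 ?_ hYai1
      have e1 : X \ (g • X : Set G) = ((g • X : Set G))ᶜ ∩ X := by
        rw [Set.diff_eq_compl_inter]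
      have e2 : (g • X : Set G) \ X = (g • X : Set G) ∩ Xᶜ := by
        rw [Set.diff_eq]
      rw [e1, e2]
      exact hfinite_union H h2 h1
    · -- g • X is equivalent to Xᶜ ; take Y = (g • X)ᶜ
      refine core H hInf X ((g • X : Set G))ᶜ K hXinv hXnt.1 hXnt.2 ?_ ?_
      · have e1 : X \ ((g • X : Set G))ᶜ = (g • X : Set G) ∩ X := by
          rw [Set.diff_eq_compl_inter, compl_compl]
        have e2 : ((g • X : Set G))ᶜ \ X = ((g • X : Set G))ᶜ ∩ Xᶜ := by
          rw [Set.diff_eq]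
        rw [e1, e2]
        exact hfinite_union H h1 h2
      · intro a
        obtain ⟨F, hF⟩ := hYai1 a
        exact ⟨F, by rw [symmdiff_compl]; exact hF⟩
  -- almost malnormality gives g ∈ H
  have hgH : g ∈ H := by
    apply hMal g
    have hset : ((fun h => g * h * g⁻¹) '' (H : Set G)) = (K : Set G) := by
      ext x
      simp only [Set.mem_image, SetLike.mem_coe, hKmem]
    rw [hset]
    exact hKHinf
  -- since g ∈ H, the conjugate subgroup equals H
  have hKH : K = H := by
    ext x
    rw [hKmem]
    constructor
    · rintro ⟨h, hh, rfl⟩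
      exact H.mul_mem (H.mul_mem hgH hh) (H.inv_mem hgH)
    · intro hx
      exact ⟨g⁻¹ * x * g, H.mul_mem (H.mul_mem (H.inv_mem hgH) hx) hgH, by group⟩
  rw [hKH, inf_idem, Subgroup.relIndex_self]
  simp [hgH]
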